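/- Let L be an r×m integer matrix of full rank r such that every r×(m−1) submatrix of L (obtained by deleting one column) also has rank r. Let δ > 0 and let C_1, …, C_m be Borel measurable subsets of T = ℝ/ℤ. Then for every sufficiently large positive integer p there exist p-measurable sets A_1, …, A_m ⊆ T such that μ_T(C_i Δ A_i) ≤ δ/m for all i ∈ {1, …, m}, and |S_L(C_1, …, C_m) − S_L(A_1, …, A_m)| ≤ δ. -/

import Mathlib

open MeasureTheory Set Matrix
open scoped ENNReal symmDiff

noncomputable section

/-- The circle group `𝕋 = ℝ/ℤ`, with its normalized Haar (probability) measure `volume`. -/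
abbrev 𝕋 : Type := AddCircle (1 : ℝ)

/-- The group homomorphism `x ↦ Lx` induced by an integer matrix `L`. -/
def Lhom {r m : ℕ} (L : Matrix (Fin r) (Fin m) ℤ) (G : Type*) [AddCommGroup G] :
    (Fin m → G) →+ (Fin r → G) where
  toFun x := fun i => ∑ j, L i j • x j
  map_zero' := by ext i; simp
  map_add' x y := by ext i; simp [smul_add, Finset.sum_add_distrib]

/-- `ker_𝕋 L`, the closed subgroup `{x ∈ 𝕋^m : Lx = 0}` of `𝕋^m`. -/
def kerT {r m : ℕ} (L : Matrix (Fin r) (Fin m) ℤ) : AddSubgroup (Fin m → 𝕋) :=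
  (Lhom L 𝕋).ker

/-- `A ⊆ 𝕋` is `p`-measurable if it is a union of intervals `[(k-1)/p, k/p)` from the
`p`-partition of `𝕋`. -/
def PMeasurable (p : ℕ) (A : Set 𝕋) : Prop :=
  ∃ s : Finset (Fin p),
    A = ⋃ k ∈ s, (fun t : ℝ => (t : 𝕋)) '' Set.Ico ((k : ℝ) / p) (((k : ℝ) + 1) / p)

/-- The `r × (m-1)` submatrix of `L` obtained by deleting column `j` has rank `r` (over ℚ). -/
def DeletedColumnsFullRank {r m : ℕ} (L : Matrix (Fin r) (Fin m) ℤ) : Prop :=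
  ∀ j : Fin m,
    ((L.submatrix id (Subtype.val : {k : Fin m // k ≠ j} → Fin m)).map
      (Int.cast : ℤ → ℚ)).rank = r

namespace ApproxAux

def Ffun : 𝕋 → ℝ := fun x => (AddCircle.equivIco 1 0 x : ℝ)

lemma measurable_Ffun : Measurable Ffun :=
  (AddCircle.measurableEquivIco 1 0).measurable.subtype_val

lemma Ffun_mem (x : 𝕋) : Ffun x ∈ Ico (0:ℝ) 1 := by
  simpa [Ffun] using (AddCircle.equivIco 1 0 x).2

lemma coe_Ffun (x : 𝕋) : ((Ffun x : ℝ) : 𝕋) = x := (AddCircle.equivIco 1 0).symm_apply_apply x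

lemma Ffun_coe {x : ℝ} (hx : x ∈ Ico (0:ℝ) 1) : Ffun ((x : ℝ) : 𝕋) = x := by
  have : (AddCircle.equivIco 1 0) (x : 𝕋) = ⟨x, by simpa using hx⟩ := by
    rw [Equiv.apply_eq_iff_eq_symm_apply]; rfl
  simp [Ffun, this]

lemma image_mk_eq_preimage {S : Set ℝ} (hS : S ⊆ Ico (0:ℝ) 1) :
    (fun t : ℝ => (t : 𝕋)) '' S = Ffun ⁻¹' S := by
  ext x
  constructor
  · rintro ⟨y, hy, rfl⟩
    simpa [mem_preimage, Ffun_coe (hS hy)] using hy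
  · intro hx
    exact ⟨Ffun x, hx, coe_Ffun x⟩

lemma volume_preimage_Ffun {S : Set ℝ} (hSm : MeasurableSet S) (hS : S ⊆ Ico (0:ℝ) 1) :
    volume (Ffun ⁻¹' S) = volume S := by
  have hmeas : MeasurableSet (Ffun ⁻¹' S) := measurable_Ffun hSm
  rw [AddCircle.add_projection_respects_measure 1 0 hmeas]
  have hset : (QuotientAddGroup.mk ⁻¹' (Ffun ⁻¹' S) ∩ Ioc (0:ℝ) (0 + 1)) ⊆
      (S ∩ Ioo 0 1) ∪ {1} := by
    rintro x ⟨hx1, hx2⟩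
    simp only [zero_add] at hx2
    rcases eq_or_lt_of_le hx2.2 with h1 | h1
    · right; simp [h1]
    · left
      have hxI : x ∈ Ico (0:ℝ) 1 := ⟨hx2.1.le, h1⟩
      have : Ffun ((x : ℝ) : 𝕋) = x := Ffun_coe hxI
      refine ⟨by simpa [this] using hx1, hx2.1, h1⟩
  have hsub : S ∩ Ioo 0 1 ⊆ QuotientAddGroup.mk ⁻¹' (Ffun ⁻¹' S) ∩ Ioc (0:ℝ) (0 + 1) := by
    rintro x ⟨hxS, hx⟩
    refine ⟨?_, hx.1, by simpa using hx.2.le⟩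
    have : Ffun ((x : ℝ) : 𝕋) = x := Ffun_coe ⟨hx.1.le, hx.2⟩
    simpa [mem_preimage, this] using hxS
  have hS' : volume (S ∩ Ioo 0 1) = volume S := by
    apply le_antisymm (measure_mono inter_subset_left)
    have : S ⊆ (S ∩ Ioo 0 1) ∪ {0} := by
      intro x hx
      rcases eq_or_lt_of_le (hS hx).1 with h | h
      · right; simp [← h]
      · left; exact ⟨hx, h, (hS hx).2⟩
    calc volume S ≤ volume ((S ∩ Ioo 0 1) ∪ {0}) := measure_mono this
      _ ≤ volume (S ∩ Ioo 0 1) + volume ({0} : Set ℝ) := measure_union_le _ _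
      _ = volume (S ∩ Ioo 0 1) := by simp
  apply le_antisymm
  · calc volume (QuotientAddGroup.mk ⁻¹' (Ffun ⁻¹' S) ∩ Ioc (0:ℝ) (0 + 1))
        ≤ volume ((S ∩ Ioo 0 1) ∪ {1}) := measure_mono hset
      _ ≤ volume (S ∩ Ioo 0 1) + volume ({1} : Set ℝ) := measure_union_le _ _
      _ = volume S := by rw [hS']; simp
  · rw [← hS']; exact measure_mono hsub

def gridIco (p : ℕ) (k : Fin p) : Set ℝ := Ico ((k : ℝ) / p) (((k : ℝ) + 1) / p)

def Gset (p : ℕ) (s : Finset (Fin p)) : Set ℝ := ⋃ k ∈ s, gridIco p k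

lemma gridIco_subset {p : ℕ} (k : Fin p) : gridIco p k ⊆ Ico (0:ℝ) 1 := by
  have hp : (0:ℝ) < p := by exact_mod_cast k.pos
  intro x hx
  refine ⟨le_trans (by positivity) hx.1, lt_of_lt_of_le hx.2 ?_⟩
  rw [div_le_one hp]
  have : (k : ℝ) + 1 ≤ p := by exact_mod_cast k.2
  linarith

lemma Gset_subset {p : ℕ} (s : Finset (Fin p)) : Gset p s ⊆ Ico (0:ℝ) 1 := by
  intro x hx
  simp only [Gset, mem_iUnion] at hx
  obtain ⟨k, _, hk⟩ := hx
  exact gridIco_subset k hk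

lemma measurableSet_Gset {p : ℕ} (s : Finset (Fin p)) : MeasurableSet (Gset p s) :=
  MeasurableSet.biUnion s.countable_toSet (fun _ _ => measurableSet_Ico)

lemma pMeasurable_iff {p : ℕ} {A : Set 𝕋} :
    PMeasurable p A ↔ ∃ s : Finset (Fin p), A = Ffun ⁻¹' Gset p s := by
  unfold PMeasurable
  refine exists_congr fun s => ?_
  have : (⋃ k ∈ s, (fun t : ℝ => (t : 𝕋)) '' Ico ((k : ℝ) / p) (((k : ℝ) + 1) / p))
      = Ffun ⁻¹' Gset p s := by
    rw [Gset, preimage_iUnion₂]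
    exact iUnion₂_congr fun k _ => image_mk_eq_preimage (gridIco_subset k)
  rw [this]


lemma mem_Ico_div_iff {p : ℕ} (hp : 0 < p) {k : ℕ} {x : ℝ} (hx : 0 ≤ x) :
    x ∈ Ico ((k : ℝ) / p) (((k : ℝ) + 1) / p) ↔ ⌊x * p⌋₊ = k := by
  have hp' : (0:ℝ) < p := by exact_mod_cast hp
  rw [Nat.floor_eq_iff (by positivity)]
  constructor
  · rintro ⟨h1, h2⟩
    rw [div_le_iff₀ hp'] at h1
    rw [lt_div_iff₀ hp'] at h2
    exact ⟨h1, h2⟩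
  · rintro ⟨h1, h2⟩
    exact ⟨(div_le_iff₀ hp').mpr h1, (lt_div_iff₀ hp').mpr h2⟩

lemma floor_lt_of_mem {p : ℕ} (hp : 0 < p) {x : ℝ} (hx : x ∈ Ico (0:ℝ) 1) : ⌊x * p⌋₊ < p := by
  have hp' : (0:ℝ) < p := by exact_mod_cast hp
  have h : x * p < p := by nlinarith [hx.2, hx.1]
  rw [Nat.floor_lt (mul_nonneg hx.1 hp'.le)]
  exact h


lemma mem_Gset_iff {p : ℕ} (hp : 0 < p) {s : Finset (Fin p)} {x : ℝ} (hx : x ∈ Ico (0:ℝ) 1) :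
    x ∈ Gset p s ↔ (⟨⌊x * p⌋₊, floor_lt_of_mem hp hx⟩ : Fin p) ∈ s := by
  simp only [Gset, mem_iUnion, gridIco]
  constructor
  · rintro ⟨k, hk, hmem⟩
    have := (mem_Ico_div_iff hp hx.1).mp hmem
    have hkk : (⟨⌊x * p⌋₊, floor_lt_of_mem hp hx⟩ : Fin p) = k := by
      exact Fin.ext this
    rwa [hkk]
  · intro h
    refine ⟨_, h, (mem_Ico_div_iff hp hx.1).mpr rfl⟩

lemma Gset_subset' {p : ℕ} (hp : 0 < p) (s : Finset (Fin p)) : Gset p s ⊆ Ico (0:ℝ) 1 := by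
  intro x hx; simp only [Gset, mem_iUnion] at hx
  obtain ⟨k, _, hk⟩ := hx
  have hp' : (0:ℝ) < p := by exact_mod_cast hp
  refine ⟨le_trans (by positivity) hk.1, lt_of_lt_of_le hk.2 ?_⟩
  rw [div_le_one hp']
  exact_mod_cast k.2

lemma Gset_refine {p q : ℕ} (hp : 0 < p) (hq : 0 < q) (s : Finset (Fin p)) :
    ∃ t : Finset (Fin (p * q)), Gset p s = Gset (p * q) t := by
  classical
  have hpq : 0 < p * q := Nat.mul_pos hp hq
  have hlt : ∀ j : Fin (p * q), (j : ℕ) / q < p := fun j =>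
    (Nat.div_lt_iff_lt_mul hq).mpr j.2
  refine ⟨Finset.univ.filter (fun j : Fin (p * q) => (⟨(j : ℕ) / q, hlt j⟩ : Fin p) ∈ s), ?_⟩
  ext x
  by_cases hxI : x ∈ Ico (0:ℝ) 1
  · rw [mem_Gset_iff hp hxI, mem_Gset_iff hpq hxI]
    simp only [Finset.mem_filter, Finset.mem_univ, true_and]
    have hfloor : ⌊x * ↑(p * q)⌋₊ / q = ⌊x * p⌋₊ := by
      have h1 : ⌊x * p * (q:ℝ)⌋₊ / q = ⌊x * p * (q:ℝ) / q⌋₊ := (Nat.floor_div_natCast _ _).symm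
      have h2 : x * p * (q:ℝ) / q = x * p := by field_simp
      have h3 : x * ↑(p * q) = x * p * (q:ℝ) := by push_cast; ring
      rw [h3, h1, h2]
    have hEq : (⟨⌊x * ↑(p * q)⌋₊ / q, hlt ⟨⌊x * ↑(p * q)⌋₊, floor_lt_of_mem hpq hxI⟩⟩ : Fin p)
        = (⟨⌊x * ↑p⌋₊, floor_lt_of_mem hp hxI⟩ : Fin p) := Fin.mk_eq_mk.mpr hfloor
    rw [hEq]
  · constructor
    · intro h; exact absurd (Gset_subset' hp s h) hxI
    · intro h; exact absurd (Gset_subset' hpq _ h) hxI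

lemma floor_mono_real {a b : ℝ} (h : a ≤ b) : ⌊a⌋₊ ≤ ⌊b⌋₊ := Nat.floor_mono h

lemma grid_approx {P : ℕ} (hP : 0 < P) (s : Finset (Fin P)) {p : ℕ} (hp : 0 < p) :
    ∃ t : Finset (Fin p),
      volume (symmDiff (Gset P s) (Gset p t)) ≤ (P + 1 : ℕ) * ENNReal.ofReal (1 / p) := by
  classical
  have hp' : (0:ℝ) < p := by exact_mod_cast hp
  have hP' : (0:ℝ) < P := by exact_mod_cast hP
  set t : Finset (Fin p) :=
    Finset.univ.filter (fun k : Fin p => ((k : ℝ) / p) ∈ Gset P s) with ht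
  refine ⟨t, ?_⟩
  have hsub : symmDiff (Gset P s) (Gset p t) ⊆
      ⋃ j ∈ Finset.range (P + 1), Ico ((j : ℝ) / P) ((j : ℝ) / P + 1 / p) := by
    intro x hx
    rw [Set.mem_symmDiff] at hx
    -- x is in one of the two sets, hence in Ico 0 1
    have hxI : x ∈ Ico (0:ℝ) 1 := by
      rcases hx with ⟨h, _⟩ | ⟨h, _⟩
      · exact Gset_subset' hP s h
      · exact Gset_subset' hp t h
    set k : ℕ := ⌊x * p⌋₊ with hk
    set kr : ℝ := (k : ℝ) / p with hkr
    have hkrx : kr ≤ x := by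
      rw [hkr, div_le_iff₀ hp']
      exact Nat.floor_le (mul_nonneg hxI.1 hp'.le)
    have hxk : x < kr + 1 / p := by
      rw [hkr]
      have := Nat.lt_floor_add_one (x * p)
      rw [← add_div, lt_div_iff₀ hp']
      exact_mod_cast this
    have hkrI : kr ∈ Ico (0:ℝ) 1 := ⟨by positivity, lt_of_le_of_lt hkrx hxI.2⟩
    -- membership in Gset p t is equivalent to kr ∈ Gset P s
    have hmemB : x ∈ Gset p t ↔ kr ∈ Gset P s := by
      rw [mem_Gset_iff hp hxI, ht]
      simp only [Finset.mem_filter, Finset.mem_univ, true_and]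
      exact Iff.rfl
    -- the indices at kr and x w.r.t. the P-grid differ
    have hne : ⌊kr * P⌋₊ ≠ ⌊x * P⌋₊ := by
      intro hEq
      have h1 := mem_Gset_iff hP hxI (s := s)
      have h2 := mem_Gset_iff hP hkrI (s := s)
      have hsame : (⟨⌊kr * P⌋₊, floor_lt_of_mem hP hkrI⟩ : Fin P)
          = ⟨⌊x * P⌋₊, floor_lt_of_mem hP hxI⟩ := Fin.mk_eq_mk.mpr hEq
      rcases hx with ⟨hA, hB⟩ | ⟨hB, hA⟩
      · exact (hmemB.not.mp hB) (h2.mpr (by rw [hsame]; exact h1.mp hA))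
      · exact hA (h1.mpr (by rw [← hsame]; exact h2.mp (hmemB.mp hB)))
    have hlt : ⌊kr * P⌋₊ < ⌊x * P⌋₊ :=
      lt_of_le_of_ne (floor_mono_real (by nlinarith)) hne
    set j : ℕ := ⌊x * P⌋₊ with hj
    have hjle : (j : ℝ) / P ≤ x := by
      rw [div_le_iff₀ hP']
      exact Nat.floor_le (mul_nonneg hxI.1 hP'.le)
    have hkrj : kr < (j : ℝ) / P := by
      rw [lt_div_iff₀ hP']
      have : kr * P < j := by
        rw [← Nat.floor_lt (mul_nonneg hkrI.1 hP'.le)] at *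
        exact_mod_cast hlt
      exact this
    have hjP : j < P + 1 := lt_of_lt_of_le (floor_lt_of_mem hP hxI) (Nat.le_succ P)
    simp only [mem_iUnion, Finset.mem_range]
    exact ⟨j, hjP, hjle, by linarith⟩
  calc volume (symmDiff (Gset P s) (Gset p t))
      ≤ volume (⋃ j ∈ Finset.range (P + 1), Ico ((j : ℝ) / P) ((j : ℝ) / P + 1 / p)) :=
        measure_mono hsub
    _ ≤ ∑ j ∈ Finset.range (P + 1), volume (Ico ((j : ℝ) / P) ((j : ℝ) / P + 1 / p)) :=
        measure_biUnion_finset_le _ _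
    _ = ∑ _j ∈ Finset.range (P + 1), ENNReal.ofReal (1 / p) := by
        refine Finset.sum_congr rfl fun j _ => ?_
        rw [Real.volume_Ico]
        congr 1
        ring
    _ = (P + 1 : ℕ) * ENNReal.ofReal (1 / p) := by
        rw [Finset.sum_const, Finset.card_range, nsmul_eq_mul]

def Alg : Set (Set 𝕋) := {A | ∃ p : ℕ, 0 < p ∧ PMeasurable p A}

lemma Gset_union {p : ℕ} (s₁ s₂ : Finset (Fin p)) :
    Gset p s₁ ∪ Gset p s₂ = Gset p (s₁ ∪ s₂) := by
  simp only [Gset]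
  ext x
  simp only [mem_union, mem_iUnion, Finset.mem_union]
  constructor
  · rintro (⟨k, hk, hm⟩ | ⟨k, hk, hm⟩)
    · exact ⟨k, Or.inl hk, hm⟩
    · exact ⟨k, Or.inr hk, hm⟩
  · rintro ⟨k, hk | hk, hm⟩
    · exact Or.inl ⟨k, hk, hm⟩
    · exact Or.inr ⟨k, hk, hm⟩

lemma pMeasurable_of_mul {p q : ℕ} (hp : 0 < p) (hq : 0 < q) {A : Set 𝕋}
    (hA : PMeasurable p A) : PMeasurable (p * q) A := by
  obtain ⟨s, rfl⟩ := pMeasurable_iff.mp hA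
  obtain ⟨t, ht⟩ := Gset_refine hp hq s
  exact pMeasurable_iff.mpr ⟨t, by rw [ht]⟩

lemma compl_pMeasurable {p : ℕ} (hp : 0 < p) {A : Set 𝕋} (hA : PMeasurable p A) :
    PMeasurable p Aᶜ := by
  classical
  obtain ⟨s, rfl⟩ := pMeasurable_iff.mp hA
  refine pMeasurable_iff.mpr ⟨sᶜ, ?_⟩
  ext x
  have hxI := Ffun_mem x
  simp only [mem_compl_iff, mem_preimage, mem_Gset_iff hp hxI, Finset.mem_compl]

lemma isSetAlgebra_Alg : IsSetAlgebra Alg := by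
  constructor
  · exact ⟨1, one_pos, ⟨∅, by simp⟩⟩
  · rintro A ⟨p, hp, hA⟩
    exact ⟨p, hp, compl_pMeasurable hp hA⟩
  · rintro A B ⟨p, hp, hA⟩ ⟨q, hq, hB⟩
    refine ⟨p * q, Nat.mul_pos hp hq, ?_⟩
    have hA' := pMeasurable_of_mul hp hq hA
    have hB' : PMeasurable (p * q) B := by
      rw [mul_comm]; exact pMeasurable_of_mul hq hp hB
    obtain ⟨s₁, rfl⟩ := pMeasurable_iff.mp hA'
    obtain ⟨s₂, rfl⟩ := pMeasurable_iff.mp hB'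
    exact pMeasurable_iff.mpr ⟨s₁ ∪ s₂, by rw [← Gset_union, preimage_union]⟩

lemma measurableSet_of_mem_Alg {A : Set 𝕋} (hA : A ∈ Alg) : MeasurableSet A := by
  obtain ⟨p, hp, hA⟩ := hA
  obtain ⟨s, rfl⟩ := pMeasurable_iff.mp hA
  exact measurable_Ffun (measurableSet_Gset s)

def cell (pk : Σ p : ℕ, Fin p) : Set 𝕋 := Ffun ⁻¹' gridIco pk.1 pk.2

lemma cell_mem_Alg (pk : Σ p : ℕ, Fin p) : cell pk ∈ Alg := by
  refine ⟨pk.1, pk.2.pos, pMeasurable_iff.mpr ⟨{pk.2}, ?_⟩⟩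
  simp [cell, Gset]

lemma open_eq_iUnion_cells {U : Set 𝕋} (hU : IsOpen U) :
    U = ⋃ (pk : Σ p : ℕ, Fin p) (_ : cell pk ⊆ U), cell pk := by
  apply Subset.antisymm
  · intro x hx
    have hpre : IsOpen ((fun t : ℝ => (t : 𝕋)) ⁻¹' U) :=
      hU.preimage (AddCircle.continuous_mk' 1)
    have hy : Ffun x ∈ (fun t : ℝ => (t : 𝕋)) ⁻¹' U := by
      simp only [mem_preimage, coe_Ffun]; exact hx
    obtain ⟨ε, hε, hball⟩ := Metric.isOpen_iff.mp hpre _ hy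
    obtain ⟨p, hpε⟩ := exists_nat_gt (1 / ε)
    have hp : 0 < p := by
      by_contra h
      push_neg at h
      interval_cases p
      · simp at hpε; linarith [one_div_pos.mpr hε, hpε]
    have hp' : (0:ℝ) < p := by exact_mod_cast hp
    have h1p : 1 / (p:ℝ) < ε := by
      rw [div_lt_iff₀ hp']
      rw [div_lt_iff₀ hε] at hpε
      linarith
    have hyI := Ffun_mem x
    set k : Fin p := ⟨⌊Ffun x * p⌋₊, floor_lt_of_mem hp hyI⟩ with hk
    have hxcell : x ∈ cell ⟨p, k⟩ := by
      simp only [cell, mem_preimage]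
      exact (mem_Ico_div_iff hp hyI.1).mpr rfl
    have hcellU : cell ⟨p, k⟩ ⊆ U := by
      intro z hz
      simp only [cell, mem_preimage, gridIco] at hz
      have hyk : Ffun x ∈ Ico ((k : ℝ) / p) (((k : ℝ) + 1) / p) :=
        (mem_Ico_div_iff hp hyI.1).mpr rfl
      have hdist : dist (Ffun z) (Ffun x) < ε := by
        rw [Real.dist_eq, abs_lt]
        have h1 : ((k : ℝ) + 1) / p - (k : ℝ) / p = 1 / p := by ring
        constructor <;> nlinarith [hz.1, hz.2, hyk.1, hyk.2]
      have : Ffun z ∈ (fun t : ℝ => (t : 𝕋)) ⁻¹' U := hball hdist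
      rw [mem_preimage, coe_Ffun] at this
      exact this
    exact mem_iUnion.mpr ⟨⟨p, k⟩, mem_iUnion.mpr ⟨hcellU, hxcell⟩⟩
  · exact iUnion_subset fun pk => iUnion_subset fun h => h

lemma generateFrom_Alg : (inferInstance : MeasurableSpace 𝕋) = .generateFrom Alg := by
  apply le_antisymm
  · conv_lhs => rw [(inferInstance : BorelSpace 𝕋).measurable_eq]
    unfold borel
    refine MeasurableSpace.generateFrom_le fun U hU => ?_
    rw [open_eq_iUnion_cells hU]
    refine MeasurableSet.iUnion fun pk => MeasurableSet.iUnion fun _ => ?_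
    exact MeasurableSpace.measurableSet_generateFrom (cell_mem_Alg pk)
  · exact MeasurableSpace.generateFrom_le fun A hA => measurableSet_of_mem_Alg hA

lemma measureDense_Alg : (volume : Measure 𝕋).MeasureDense Alg :=
  Measure.MeasureDense.of_generateFrom_isSetAlgebra_finite (volume : Measure 𝕋) isSetAlgebra_Alg generateFrom_Alg

lemma good_approx (C : Set 𝕋) (hC : MeasurableSet C) {ε : ℝ} (hε : 0 < ε) :
    ∃ p₀ : ℕ, 0 < p₀ ∧ ∀ p : ℕ, p₀ ≤ p → ∃ A : Set 𝕋,
      PMeasurable p A ∧ MeasurableSet A ∧ volume (C ∆ A) ≤ ENNReal.ofReal ε := by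
  obtain ⟨B, hBAlg, hCB⟩ := measureDense_Alg.approx C hC (measure_ne_top _ _) (ε / 2) (by linarith)
  obtain ⟨P, hP, hBP⟩ := hBAlg
  obtain ⟨s, rfl⟩ := pMeasurable_iff.mp hBP
  refine ⟨max 1 ⌈2 * ((P : ℝ) + 1) / ε⌉₊, lt_of_lt_of_le one_pos (le_max_left _ _), fun p hp => ?_⟩
  have hp1 : 0 < p := lt_of_lt_of_le (lt_of_lt_of_le one_pos (le_max_left _ _)) hp
  have hp' : (0:ℝ) < p := by exact_mod_cast hp1
  obtain ⟨t, hvol⟩ := grid_approx hP s hp1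
  refine ⟨Ffun ⁻¹' Gset p t, pMeasurable_iff.mpr ⟨t, rfl⟩,
    measurable_Ffun (measurableSet_Gset t), ?_⟩
  have hBA : volume ((Ffun ⁻¹' Gset P s) ∆ (Ffun ⁻¹' Gset p t)) ≤ ENNReal.ofReal (ε / 2) := by
    rw [← preimage_symmDiff]
    have hsub : (Gset P s) ∆ (Gset p t) ⊆ Ico (0:ℝ) 1 := by
      intro x hx
      rw [Set.mem_symmDiff] at hx
      rcases hx with ⟨h, _⟩ | ⟨h, _⟩
      · exact Gset_subset' hP s h
      · exact Gset_subset' hp1 t h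
    rw [volume_preimage_Ffun ((measurableSet_Gset s).symmDiff (measurableSet_Gset t)) hsub]
    refine le_trans hvol ?_
    have hcast : ((P + 1 : ℕ) : ℝ≥0∞) * ENNReal.ofReal (1 / p)
        = ENNReal.ofReal (((P : ℝ) + 1) * (1 / p)) := by
      rw [ENNReal.ofReal_mul (by positivity)]
      congr 1
      rw [← ENNReal.ofReal_natCast]
      congr 1
      push_cast
      ring
    rw [hcast]
    apply ENNReal.ofReal_le_ofReal
    -- (P+1)/p ≤ ε/2  since  p ≥ ⌈2(P+1)/ε⌉₊ ≥ 2(P+1)/ε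
    have h1 : 2 * ((P : ℝ) + 1) / ε ≤ p := by
      calc 2 * ((P : ℝ) + 1) / ε ≤ (⌈2 * ((P : ℝ) + 1) / ε⌉₊ : ℝ) := Nat.le_ceil _
        _ ≤ p := by exact_mod_cast le_trans (le_max_right _ _) hp
    rw [div_le_iff₀ hε] at h1
    rw [mul_one_div, div_le_div_iff₀ hp' (by norm_num : (0:ℝ) < 2)]
    linarith
  calc volume (C ∆ (Ffun ⁻¹' Gset p t))
      ≤ volume (C ∆ (Ffun ⁻¹' Gset P s)) + volume ((Ffun ⁻¹' Gset P s) ∆ (Ffun ⁻¹' Gset p t)) :=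
        measure_symmDiff_le _ _ _
    _ ≤ ENNReal.ofReal (ε / 2) + ENNReal.ofReal (ε / 2) := add_le_add hCB.le hBA
    _ = ENNReal.ofReal ε := by rw [← ENNReal.ofReal_add (by linarith) (by linarith)]; norm_num

end ApproxAux

namespace ApproxAux2

-- Rows of the deleted matrix are linearly independent, expressed as: vecMul c D = 0 → c = 0
lemma vecMul_eq_zero_of_rank {R : Type*} [Field R] {n : Type*} [Fintype n] {q : ℕ}
    (D : Matrix (Fin q) n R) (hD : D.rank = q) {c : Fin q → R}
    (hc : Matrix.vecMul c D = 0) : c = 0 := by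
  classical
  have hrt : Dᵀ.rank = q := by rw [Matrix.rank_transpose]; exact hD
  have hker : LinearMap.ker Dᵀ.mulVecLin = ⊥ := by
    have h1 := Dᵀ.mulVecLin.finrank_range_add_finrank_ker
    rw [Module.finrank_pi, Fintype.card_fin] at h1
    have h2 : Module.finrank R ↥(LinearMap.range Dᵀ.mulVecLin) = q := hrt
    rw [h2] at h1
    have h3 : Module.finrank R ↥(LinearMap.ker Dᵀ.mulVecLin) = 0 := by omega
    exact Submodule.finrank_eq_zero.mp h3
  have h : Dᵀ.mulVecLin c = 0 := by
    rw [Matrix.mulVecLin_apply, Matrix.mulVec_transpose, hc]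
  rw [← LinearMap.mem_ker, hker, Submodule.mem_bot] at h
  exact h

/-- From the deleted-column full-rank condition, produce a rational kernel vector with
`v j = 1`. -/
lemma exists_kernel_vector {r m : ℕ} (L : Matrix (Fin r) (Fin m) ℤ)
    (hsub : DeletedColumnsFullRank L) (j : Fin m) :
    ∃ v : Fin m → ℚ, (L.map (Int.cast : ℤ → ℚ)).mulVec v = 0 ∧ v j = 1 := by
  classical
  set M : Matrix (Fin r) (Fin m) ℚ := L.map (Int.cast : ℤ → ℚ) with hM
  set W : Submodule ℚ (Fin m → ℚ) := Submodule.span ℚ (Set.range fun i => M i) with hW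
  have hnmem : Pi.single j (1:ℚ) ∉ W := by
    intro hmem
    rw [hW, Submodule.mem_span_range_iff_exists_fun] at hmem
    obtain ⟨c, hc⟩ := hmem
    set D := (L.submatrix id (Subtype.val : {k : Fin m // k ≠ j} → Fin m)).map
      (Int.cast : ℤ → ℚ) with hD
    have hzero : Matrix.vecMul c D = 0 := by
      funext k
      have := congrFun hc (k : Fin m)
      simp only [Pi.single_apply] at this
      rw [if_neg k.2] at this
      simpa [Matrix.vecMul, dotProduct, hD, Matrix.submatrix, Matrix.map_apply, hM,
        Finset.sum_apply, Pi.smul_apply, smul_eq_mul] using this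
    have hc0 : c = 0 := vecMul_eq_zero_of_rank D (hsub j) hzero
    have := congrFun hc j
    rw [hc0] at this
    simp at this
  obtain ⟨f, hf, hmap⟩ := W.exists_dual_map_eq_bot_of_notMem hnmem inferInstance
  set w : Fin m → ℚ := fun k => f (Pi.single k 1) with hw
  have hsingle : ∀ k : Fin m, (fun l => if k = l then (1:ℚ) else 0) = Pi.single k 1 := by
    intro k; funext l; simp [Pi.single_apply, eq_comm]
  have hfeq : ∀ x : Fin m → ℚ, f x = ∑ k, x k * w k := by
    intro x
    rw [LinearMap.pi_apply_eq_sum_univ f x]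
    refine Finset.sum_congr rfl fun k _ => ?_
    rw [smul_eq_mul, hsingle k]
  have hwj : w j ≠ 0 := hf
  refine ⟨(w j)⁻¹ • w, ?_, by simp [hwj]⟩
  funext i
  have hrow : f (M i) = 0 := by
    have : M i ∈ W := Submodule.subset_span ⟨i, rfl⟩
    have h0 : f (M i) ∈ W.map f := ⟨M i, this, rfl⟩
    rwa [hmap, Submodule.mem_bot] at h0
  rw [hfeq] at hrow
  simp only [Matrix.mulVec, dotProduct, Pi.zero_apply, Pi.smul_apply, smul_eq_mul]
  have hmul : ∑ k, M i k * ((w j)⁻¹ * w k) = (w j)⁻¹ * ∑ k, M i k * w k := by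
    rw [Finset.mul_sum]
    exact Finset.sum_congr rfl fun k _ => by ring
  rw [hmul, hrow, mul_zero]

variable {r m : ℕ} (L : Matrix (Fin r) (Fin m) ℤ)

lemma continuous_Lhom : Continuous (Lhom L 𝕋) := by
  have h : ⇑(Lhom L 𝕋) = fun x => fun i => ∑ j, L i j • x j := rfl
  rw [h]
  exact continuous_pi fun i => continuous_finset_sum _ fun j _ =>
    (continuous_zsmul (L i j)).comp (continuous_apply j)

lemma isClosed_kerT : IsClosed ((kerT L : AddSubgroup (Fin m → 𝕋)) : Set (Fin m → 𝕋)) := by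
  have : ((kerT L : AddSubgroup (Fin m → 𝕋)) : Set (Fin m → 𝕋)) = (Lhom L 𝕋) ⁻¹' {0} := by
    ext x; simp [kerT, AddMonoidHom.mem_ker]
  rw [this]
  exact isClosed_singleton.preimage (continuous_Lhom L)

instance : CompactSpace (kerT L) :=
  isCompact_iff_compactSpace.mp ((isClosed_kerT L).isCompact)

/-- Coordinate evaluation as an additive monoid hom on the kernel. -/
def evalHom (j : Fin m) : kerT L →+ 𝕋 :=
  (Pi.evalAddMonoidHom (fun _ : Fin m => 𝕋) j).comp (kerT L).subtype

lemma continuous_evalHom (j : Fin m) : Continuous (evalHom L j) :=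
  (continuous_apply j).comp continuous_subtype_val

lemma surjective_evalHom (hsub : DeletedColumnsFullRank L) (j : Fin m) :
    Function.Surjective (evalHom L j) := by
  obtain ⟨v, hv, hvj⟩ := exists_kernel_vector L hsub j
  intro t
  induction t using QuotientAddGroup.induction_on with
  | H a =>
  set x : Fin m → 𝕋 := fun k => (((v k : ℝ) * a : ℝ) : 𝕋) with hx
  set mkH : ℝ →+ 𝕋 := QuotientAddGroup.mk' (AddSubgroup.zmultiples (1:ℝ)) with hmkH
  have hker : x ∈ kerT L := by
    rw [kerT, AddMonoidHom.mem_ker]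
    funext i
    show ∑ k, L i k • x k = 0
    have hq : ∑ k, (L i k : ℚ) * v k = 0 := by
      have := congrFun hv i
      simpa [Matrix.mulVec, dotProduct, Matrix.map_apply] using this
    have hcast : ∑ k, (L i k : ℝ) * (v k : ℝ) = 0 := by
      have h2 := congrArg (Rat.cast : ℚ → ℝ) hq
      push_cast at h2
      convert h2 using 2
    have hr' : ∑ k, L i k • ((v k : ℝ) * a) = (∑ k, (L i k : ℝ) * (v k : ℝ)) * a := by
      rw [Finset.sum_mul]
      exact Finset.sum_congr rfl fun k _ => by rw [zsmul_eq_mul]; ring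
    calc ∑ k, L i k • x k
        = ∑ k, mkH (L i k • ((v k : ℝ) * a)) :=
          Finset.sum_congr rfl fun k _ => by
            rw [show x k = mkH ((v k : ℝ) * a) from rfl, ← AddMonoidHom.map_zsmul]
      _ = mkH (∑ k, L i k • ((v k : ℝ) * a)) := (map_sum mkH _ _).symm
      _ = mkH ((∑ k, (L i k : ℝ) * (v k : ℝ)) * a) := by rw [hr']
      _ = 0 := by rw [hcast, zero_mul, map_zero]
  refine ⟨⟨x, hker⟩, ?_⟩
  show x j = (a : 𝕋)
  rw [hx]
  simp only [hvj]
  norm_num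

instance : BorelSpace (kerT L) :=
  Subtype.borelSpace ((kerT L : AddSubgroup (Fin m → 𝕋)) : Set (Fin m → 𝕋))
example : IsTopologicalAddGroup (kerT L) := inferInstance

lemma map_evalHom_eq (hsub : DeletedColumnsFullRank L) (j : Fin m) (μL : Measure (kerT L))
    [μL.IsAddHaarMeasure] [IsProbabilityMeasure μL] :
    Measure.map (evalHom L j) μL = volume := by
  have h := AddMonoidHom.measurePreserving (f := evalHom L j) (μ := μL) (ν := volume)
    (continuous_evalHom L j) (surjective_evalHom L hsub j)
    (by simp [AddCircle.measure_univ])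
  exact h.map_eq


lemma abs_toReal_sub_le {α : Type*} [MeasurableSpace α] (μ : Measure α) [IsFiniteMeasure μ]
    (S T : Set α) :
    |(μ S).toReal - (μ T).toReal| ≤ (μ (symmDiff S T)).toReal := by
  have key : ∀ U V : Set α, μ U ≤ μ V + μ (symmDiff U V) := by
    intro U V
    refine le_trans (measure_mono ?_) (measure_union_le _ _)
    intro x hx
    by_cases h : x ∈ V
    · exact Or.inl h
    · exact Or.inr (Set.mem_symmDiff.mpr (Or.inl ⟨hx, h⟩))
  have toReal_key : ∀ U V : Set α, (μ U).toReal ≤ (μ V).toReal + (μ (symmDiff U V)).toReal := by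
    intro U V
    have h1 := ENNReal.toReal_mono
      (ENNReal.add_ne_top.mpr ⟨measure_ne_top μ V, measure_ne_top μ _⟩) (key U V)
    rwa [ENNReal.toReal_add (measure_ne_top μ V) (measure_ne_top μ _)] at h1
  have e1 := toReal_key S T
  have e2 := toReal_key T S
  rw [symmDiff_comm] at e2
  rw [abs_sub_le_iff]
  constructor <;> linarith
end ApproxAux2

/-- **Approximation by `p`-measurable sets.**
Let `L` be an `r × m` integer matrix of full rank `r` such that every `r × (m-1)` submatrix
obtained by deleting one column also has rank `r`. Let `δ > 0` and let `C₁, …, C_m` be Borel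
subsets of `𝕋`. Then for every sufficiently large `p` there are `p`-measurable sets
`A₁, …, A_m ⊆ 𝕋` with `μ_𝕋(C_i Δ A_i) ≤ δ/m` for all `i` and
`|S_L(C₁, …, C_m) - S_L(A₁, …, A_m)| ≤ δ`, where `S_L` is computed with the normalized Haar
probability measure `μL` on `ker_𝕋 L`. -/
theorem approximation_lemma {r m : ℕ} (L : Matrix (Fin r) (Fin m) ℤ)
    (hrank : (L.map (Int.cast : ℤ → ℚ)).rank = r)
    (hsub : DeletedColumnsFullRank L)
    {δ : ℝ} (hδ : 0 < δ)
    (C : Fin m → Set 𝕋) (hC : ∀ i, MeasurableSet (C i))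
    (μL : Measure (kerT L)) (hHaar : μL.IsAddHaarMeasure) (hprob : IsProbabilityMeasure μL) :
    ∃ p₀ : ℕ, ∀ p : ℕ, p₀ ≤ p →
      ∃ A : Fin m → Set 𝕋,
        (∀ i, PMeasurable p (A i)) ∧
        (∀ i, (volume (symmDiff (C i) (A i))).toReal ≤ δ / m) ∧
        |(μL {x : kerT L | ∀ i, (x : Fin m → 𝕋) i ∈ C i}).toReal -
          (μL {x : kerT L | ∀ i, (x : Fin m → 𝕋) i ∈ A i}).toReal| ≤ δ := by
  classical
  rcases Nat.eq_zero_or_pos m with hm | hm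
  · subst hm
    refine ⟨1, fun p _ => ⟨fun i => i.elim0, fun i => i.elim0, fun i => i.elim0, ?_⟩⟩
    have h1 : {x : kerT L | ∀ i, (x : Fin 0 → 𝕋) i ∈ C i} = Set.univ :=
      eq_univ_of_forall fun x i => i.elim0
    have h2 : {x : kerT L | ∀ i : Fin 0, (x : Fin 0 → 𝕋) i ∈ (fun i : Fin 0 => i.elim0 (α := Set 𝕋)) i}
        = Set.univ := eq_univ_of_forall fun x i => i.elim0
    rw [h1, h2, sub_self, abs_zero]
    exact hδ.le
  · haveI := hHaar
    haveI := hprob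
    have hm' : (0:ℝ) < (m : ℝ) := by exact_mod_cast hm
    have hε : 0 < δ / (m : ℝ) := by positivity
    choose p₀f hp₀f hAf using fun i => ApproxAux.good_approx (C i) (hC i) hε
    refine ⟨Finset.univ.sup p₀f ⊔ 1, fun p hp => ?_⟩
    have hple : ∀ i, p₀f i ≤ p := fun i =>
      le_trans (le_trans (Finset.le_sup (Finset.mem_univ i)) le_sup_left) hp
    choose A hA1 hA2 hA3 using fun i => hAf i p (hple i)
    have hA3' : ∀ i, (volume (symmDiff (C i) (A i))).toReal ≤ δ / (m : ℝ) := fun i =>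
      ENNReal.toReal_le_of_le_ofReal hε.le (hA3 i)
    refine ⟨A, hA1, hA3', ?_⟩
    set SC := {x : kerT L | ∀ i, (x : Fin m → 𝕋) i ∈ C i} with hSC
    set SA := {x : kerT L | ∀ i, (x : Fin m → 𝕋) i ∈ A i} with hSA
    have hcoord : ∀ i : Fin m, Measurable fun x : kerT L => (x : Fin m → 𝕋) i := fun i =>
      (measurable_pi_apply i).comp measurable_subtype_coe
    -- the symmetric difference is covered by coordinatewise symmetric differences
    have hsubset : symmDiff SC SA ⊆
        ⋃ i, (fun x : kerT L => (x : Fin m → 𝕋) i) ⁻¹' (symmDiff (C i) (A i)) := by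
      intro x hx
      rw [Set.mem_symmDiff] at hx
      rcases hx with ⟨hxC, hxA⟩ | ⟨hxA, hxC⟩
      · rw [hSA, mem_setOf_eq] at hxA
        push_neg at hxA
        obtain ⟨i, hi⟩ := hxA
        exact mem_iUnion.mpr ⟨i, Set.mem_symmDiff.mpr (Or.inl ⟨hxC i, hi⟩)⟩
      · rw [hSC, mem_setOf_eq] at hxC
        push_neg at hxC
        obtain ⟨i, hi⟩ := hxC
        exact mem_iUnion.mpr ⟨i, Set.mem_symmDiff.mpr (Or.inr ⟨hxA i, hi⟩)⟩
    have hEi : ∀ i : Fin m,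
        μL ((fun x : kerT L => (x : Fin m → 𝕋) i) ⁻¹' (symmDiff (C i) (A i)))
          = volume (symmDiff (C i) (A i)) := by
      intro i
      have hfun : (fun x : kerT L => (x : Fin m → 𝕋) i) = ⇑(ApproxAux2.evalHom L i) := rfl
      rw [hfun, ← ApproxAux2.map_evalHom_eq L hsub i μL,
        Measure.map_apply (ApproxAux2.continuous_evalHom L i).measurable
          ((hC i).symmDiff (hA2 i))]
    have hSCm : MeasurableSet SC := by
      have h : SC = ⋂ i, (fun x : kerT L => (x : Fin m → 𝕋) i) ⁻¹' (C i) := by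
        ext x; simp [hSC]
      rw [h]
      exact MeasurableSet.iInter fun i => (hcoord i) (hC i)
    have hSAm : MeasurableSet SA := by
      have h : SA = ⋂ i, (fun x : kerT L => (x : Fin m → 𝕋) i) ⁻¹' (A i) := by
        ext x; simp [hSA]
      rw [h]
      exact MeasurableSet.iInter fun i => (hcoord i) (hA2 i)
    have habs : |(μL SC).toReal - (μL SA).toReal| ≤ (μL (symmDiff SC SA)).toReal :=
      ApproxAux2.abs_toReal_sub_le μL SC SA
    have hmeasle : μL (symmDiff SC SA) ≤ ∑ i, volume (symmDiff (C i) (A i)) := by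
      calc μL (symmDiff SC SA)
          ≤ μL (⋃ i, (fun x : kerT L => (x : Fin m → 𝕋) i) ⁻¹' (symmDiff (C i) (A i))) :=
            measure_mono hsubset
        _ ≤ ∑' i, μL ((fun x : kerT L => (x : Fin m → 𝕋) i) ⁻¹' (symmDiff (C i) (A i))) :=
            measure_iUnion_le _
        _ = ∑ i, μL ((fun x : kerT L => (x : Fin m → 𝕋) i) ⁻¹' (symmDiff (C i) (A i))) :=
            tsum_fintype _
        _ = ∑ i, volume (symmDiff (C i) (A i)) := Finset.sum_congr rfl fun i _ => hEi i
    have hfin : (∑ i, volume (symmDiff (C i) (A i))) ≠ ⊤ :=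
      (ENNReal.sum_lt_top.mpr fun i _ => measure_lt_top _ _).ne
    have hstep : (μL (symmDiff SC SA)).toReal ≤ ∑ i, (volume (symmDiff (C i) (A i))).toReal := by
      have h1 := ENNReal.toReal_mono hfin hmeasle
      rwa [ENNReal.toReal_sum (fun i _ => measure_ne_top _ _)] at h1
    have hfinal : ∑ i, (volume (symmDiff (C i) (A i))).toReal ≤ δ := by
      calc ∑ i, (volume (symmDiff (C i) (A i))).toReal
          ≤ ∑ _i : Fin m, δ / (m : ℝ) := Finset.sum_le_sum fun i _ => hA3' i
        _ = δ := by
            rw [Finset.sum_const, Finset.card_univ, Fintype.card_fin, nsmul_eq_mul]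
            field_simp
    calc |(μL SC).toReal - (μL SA).toReal| ≤ (μL (symmDiff SC SA)).toReal := habs
      _ ≤ ∑ i, (volume (symmDiff (C i) (A i))).toReal := hstep
      _ ≤ δ := hfinal
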